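/- Let E be a finite-dimensional real inner product space, H : E → E a positive definite self-adjoint linear operator, A : E → ℝ^m a surjective linear map, b ∈ ℝ^m, t > 0, and s̄, g ∈ E with H s̄ = −g. Set x̄ := −(1/t)g, let d̄ ∈ ℝ^m be the unique solution of (A H A*) d̄ = −(A g + t·b), and define ŝ := s̄ − A*d̄, x̂ := (1/t) H ŝ, and λ̄² := ⟨(A H A*) d̄, d̄⟩. Then: (i) A x̂ = b; (ii) ⟨H(ŝ − s̄), ŝ − s̄⟩ = λ̄²; (iii) t²·⟨H⁻¹(x̂ − x̄), x̂ − x̄⟩ = λ̄². -/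

import Mathlib

open scoped RealInnerProductSpace

/-- algebraic content of Lemma 4.1, the Dual Gambit Rule. Let `H` be a
positive definite self-adjoint operator with inverse `Hinv`, `A` surjective, `t > 0`, and
`H s̄ = -g`.  Let `d̄` solve `(A H A*) d̄ = -(A g + t b)`, and set `ŝ = s̄ - A* d̄`,
`x̄ = -(1/t) g`, `x̂ = (1/t) H ŝ`, `λ̄² = ⟨(A H A*) d̄, d̄⟩`.  Then (i) `A x̂ = b`;
(ii) `⟨H(ŝ - s̄), ŝ - s̄⟩ = λ̄²`; (iii) `t² ⟨H⁻¹(x̂ - x̄), x̂ - x̄⟩ = λ̄²`. -/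
theorem stmt6 {E : Type*} [NormedAddCommGroup E] [InnerProductSpace ℝ E]
    [FiniteDimensional ℝ E] {m : ℕ}
    (H : E →ₗ[ℝ] E) (hsym : ∀ u v : E, ⟪H u, v⟫ = ⟪u, H v⟫)
    (hpos : ∀ u : E, u ≠ 0 → 0 < ⟪H u, u⟫)
    (Hinv : E →ₗ[ℝ] E) (hHinv : Hinv ∘ₗ H = LinearMap.id) (hHinv' : H ∘ₗ Hinv = LinearMap.id)
    (A : E →ₗ[ℝ] EuclideanSpace ℝ (Fin m)) (hA : Function.Surjective A)
    (b : EuclideanSpace ℝ (Fin m)) (t : ℝ) (ht : 0 < t)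
    (sb g : E) (hsb : H sb = -g)
    (db : EuclideanSpace ℝ (Fin m))
    (hdb : A (H (LinearMap.adjoint A db)) = -(A g + t • b)) :
    A ((1 / t) • H (sb - LinearMap.adjoint A db)) = b ∧
    ⟪H ((sb - LinearMap.adjoint A db) - sb), (sb - LinearMap.adjoint A db) - sb⟫
      = ⟪A (H (LinearMap.adjoint A db)), db⟫ ∧
    t ^ 2 * ⟪Hinv ((1 / t) • H (sb - LinearMap.adjoint A db) - (-(1 / t) • g)),
        (1 / t) • H (sb - LinearMap.adjoint A db) - (-(1 / t) • g)⟫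
      = ⟪A (H (LinearMap.adjoint A db)), db⟫ := by
  have ht' : t ≠ 0 := ne_of_gt ht
  set w := LinearMap.adjoint A db with hw
  have hadj : ⟪H w, w⟫ = ⟪A (H w), db⟫ := by
    rw [← LinearMap.adjoint_inner_right A (H w) db]
  refine ⟨?_, ?_, ?_⟩
  · rw [map_smul, map_sub, map_sub, hsb, map_neg, hdb]
    rw [sub_neg_eq_add]
    rw [show -A g + (A g + t • b) = t • b by abel]
    rw [smul_smul]
    field_simp
    exact one_smul _ b
  · have h1 : (sb - w) - sb = -w := by abel
    rw [h1, map_neg, inner_neg_neg, hadj]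
  · have h2 : (1 / t) • H (sb - w) - (-(1 / t) • g) = (1 / t) • (-(H w)) := by
      rw [map_sub, hsb]
      module
    rw [h2]
    have h3 : Hinv ((1 / t) • (-(H w))) = (1 / t) • (-w) := by
      rw [map_smul, map_neg]
      have : Hinv (H w) = w := by
        have := LinearMap.congr_fun hHinv w
        simpa using this
      rw [this]
    rw [h3, real_inner_smul_left, real_inner_smul_right, inner_neg_neg,
      ← hsym, hadj]
    field_simp
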